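/- Let ρ > 0, ε > 0, V > 0, and β > 0. Then the number s := ((ρ − β)V − ε + √(4ρεV + ((ρ − β)V − ε)²)) / (2V) lies in the interval (0, ρ) and satisfies (ρ − s)·(ε + s·V) = β·s·V; hence it is the unique solution of the market balance equation in (0, ρ). -/

import Mathlib

open Filter Topology

/-- closed form for the unique steady state. -/
theorem steady_state_closed_form
    (ρ ε V β : ℝ) (hρ : 0 < ρ) (hε : 0 < ε) (hV : 0 < V) (hβ : 0 < β) :
    (((ρ - β) * V - ε + Real.sqrt (4 * ρ * ε * V + ((ρ - β) * V - ε) ^ 2)) / (2 * V))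
        ∈ Set.Ioo 0 ρ ∧
      (ρ - ((ρ - β) * V - ε + Real.sqrt (4 * ρ * ε * V + ((ρ - β) * V - ε) ^ 2)) / (2 * V))
          * (ε + (((ρ - β) * V - ε + Real.sqrt (4 * ρ * ε * V + ((ρ - β) * V - ε) ^ 2)) / (2 * V)) * V)
        = β * (((ρ - β) * V - ε + Real.sqrt (4 * ρ * ε * V + ((ρ - β) * V - ε) ^ 2)) / (2 * V)) * V ∧
      ∀ s' : ℝ, s' ∈ Set.Ioo 0 ρ → (ρ - s') * (ε + s' * V) = β * s' * V →
        s' = ((ρ - β) * V - ε + Real.sqrt (4 * ρ * ε * V + ((ρ - β) * V - ε) ^ 2)) / (2 * V) := by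
  set b : ℝ := (ρ - β) * V - ε with hb
  set q : ℝ := Real.sqrt (4 * ρ * ε * V + b ^ 2) with hq
  have hD : (0:ℝ) ≤ 4 * ρ * ε * V + b ^ 2 := by positivity
  have hq2 : q ^ 2 = 4 * ρ * ε * V + b ^ 2 := Real.sq_sqrt hD
  have hq0 : 0 ≤ q := Real.sqrt_nonneg _
  have hbq : -b < q := by nlinarith [mul_pos (mul_pos (mul_pos hρ hε) hV) (by norm_num : (0:ℝ) < 4)]
  have h2V : (0:ℝ) < 2 * V := by linarith
  have hspos : 0 < (b + q) / (2 * V) := div_pos (by linarith) h2V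
  have hqlt : q < 2 * ρ * V - b := by
    have h1 : 0 < 2 * ρ * V - b := by nlinarith
    nlinarith [mul_pos (mul_pos hρ hV) (mul_pos hβ hV)]
  have hslt : (b + q) / (2 * V) < ρ := by
    rw [div_lt_iff₀ h2V]; linarith
  have hq2' : q ^ 2 = 4 * ρ * ε * V + ((ρ - β) * V - ε) ^ 2 := by rw [hq2, hb]
  refine ⟨⟨hspos, hslt⟩, ?_, ?_⟩
  · simp only [hb]
    field_simp
    linear_combination (-1) * hq2'
  · intro s' ⟨hs0, hsρ⟩ heq
    have hroot : V * s' ^ 2 - b * s' - ρ * ε = 0 := by nlinarith [heq]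
    have hroot' : V * s' ^ 2 - ((ρ - β) * V - ε) * s' - ρ * ε = 0 := by
      rw [← hb]; exact hroot
    have hfac : (s' - (b + q) / (2 * V)) * (s' - (b - q) / (2 * V)) = 0 := by
      simp only [hb]
      field_simp
      linear_combination (4*V) * hroot' - hq2'
    rcases mul_eq_zero.mp hfac with h | h
    · linarith [sub_eq_zero.mp h]
    · exfalso
      have : s' = (b - q) / (2 * V) := by linarith [sub_eq_zero.mp h]
      have hneg : (b - q) / (2 * V) ≤ 0 := by
        apply div_nonpos_of_nonpos_of_nonneg <;> nlinarith
      linarith [this ▸ hs0]
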